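/- Let Φ be a Gaussian mixture density with k components in ℝ^d. If the modal set Mode(Φ) is infinite, then Φ has a degenerate critical point, i.e. there exists x with ∇Φ(x) = 0 and det D²Φ(x) = 0. -/

import Mathlib

open scoped BigOperators RealInnerProductSpace
open Matrix
open scoped ContDiff
open Real

/-- The density of a (nondegenerate) Gaussian with mean `μ` and covariance matrix `S`
on the Euclidean space indexed by `ι`. -/
noncomputable def gaussianPdf {ι : Type*} [Fintype ι] [DecidableEq ι]
    (μ : EuclideanSpace ℝ ι) (S : Matrix ι ι ℝ) (x : EuclideanSpace ℝ ι) : ℝ :=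
  (2 * Real.pi) ^ (-(Fintype.card ι : ℝ) / 2) * S.det ^ (-(1 : ℝ) / 2) *
    Real.exp (-(1 / 2 : ℝ) * ((fun i => x i - μ i) ⬝ᵥ (S⁻¹ *ᵥ (fun i => x i - μ i))))

/-- A `k`-component Gaussian mixture density. -/
noncomputable def mixturePdf {ι : Type*} [Fintype ι] [DecidableEq ι] {k : ℕ}
    (α : Fin k → ℝ) (μ : Fin k → EuclideanSpace ℝ ι) (S : Fin k → Matrix ι ι ℝ)
    (x : EuclideanSpace ℝ ι) : ℝ :=
  ∑ i, α i * gaussianPdf (μ i) (S i) x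

/-- `Φ` is a Gaussian mixture density with weights `α`, means `μ`,
and (positive definite) covariance matrices `S`. -/
def IsGaussianMixture {ι : Type*} [Fintype ι] [DecidableEq ι] {k : ℕ}
    (Φ : EuclideanSpace ℝ ι → ℝ) (α : Fin k → ℝ) (μ : Fin k → EuclideanSpace ℝ ι)
    (S : Fin k → Matrix ι ι ℝ) : Prop :=
  (∀ i, 0 < α i) ∧ (∑ i, α i) = 1 ∧ (∀ i, (S i).PosDef) ∧
    ∀ x, Φ x = mixturePdf α μ S x

/-- The Hessian matrix of `f : ℝ^ι → ℝ` at `x`. -/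
noncomputable def hessianMatrix {ι : Type*} [Fintype ι] [DecidableEq ι]
    (f : EuclideanSpace ℝ ι → ℝ) (x : EuclideanSpace ℝ ι) : Matrix ι ι ℝ :=
  Matrix.of fun i j =>
    iteratedFDeriv ℝ 2 f x ![EuclideanSpace.single i 1, EuclideanSpace.single j 1]

noncomputable section
variable {d : ℕ}

def quadF (M : Matrix (Fin d) (Fin d) ℝ) (m x : EuclideanSpace ℝ (Fin d)) : ℝ :=
  ∑ a, ∑ b, (x a - m a) * (M a b * (x b - m b))

def quadD (M : Matrix (Fin d) (Fin d) ℝ) (m x : EuclideanSpace ℝ (Fin d)) :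
    EuclideanSpace ℝ (Fin d) →L[ℝ] ℝ :=
  ∑ a, ∑ b, ((x a - m a) • (M a b • EuclideanSpace.proj b)
    + (M a b * (x b - m b)) • EuclideanSpace.proj a)

lemma coord_hasFDerivAt (a : Fin d) (m : ℝ) (x : EuclideanSpace ℝ (Fin d)) :
    HasFDerivAt (fun y : EuclideanSpace ℝ (Fin d) => y a - m)
      (EuclideanSpace.proj a : EuclideanSpace ℝ (Fin d) →L[ℝ] ℝ) x := by
  have := ((EuclideanSpace.proj (𝕜 := ℝ) a).hasFDerivAt (x := x)).sub_const m
  simpa [PiLp.proj_apply] using this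

lemma hasFDerivAt_quadF (M : Matrix (Fin d) (Fin d) ℝ) (m x : EuclideanSpace ℝ (Fin d)) :
    HasFDerivAt (quadF M m) (quadD M m x) x := by
  unfold quadF quadD
  apply HasFDerivAt.fun_sum
  intro a _
  apply HasFDerivAt.fun_sum
  intro b _
  exact (coord_hasFDerivAt a (m a) x).mul
    ((coord_hasFDerivAt b (m b) x).const_mul (M a b))

lemma contDiff_coord (a : Fin d) (m : ℝ) :
    ContDiff ℝ ∞ (fun y : EuclideanSpace ℝ (Fin d) => y a - m) := by
  have : ContDiff ℝ ∞ (⇑(EuclideanSpace.proj (𝕜 := ℝ) a) : EuclideanSpace ℝ (Fin d) → ℝ) :=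
    ContinuousLinearMap.contDiff _
  simpa [PiLp.proj_apply] using this.sub contDiff_const

lemma contDiff_quadF (M : Matrix (Fin d) (Fin d) ℝ) (m : EuclideanSpace ℝ (Fin d)) :
    ContDiff ℝ ∞ (quadF M m) := by
  apply ContDiff.sum; intro a _
  apply ContDiff.sum; intro b _
  exact (contDiff_coord a (m a)).mul (contDiff_const.mul (contDiff_coord b (m b)))

lemma quadD_apply (M : Matrix (Fin d) (Fin d) ℝ) (m x u : EuclideanSpace ℝ (Fin d)) :
    quadD M m x u = ∑ a, ∑ b, ((x a - m a) * (M a b * u b) + M a b * (x b - m b) * u a) := by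
  simp [quadD, ContinuousLinearMap.sum_apply, PiLp.proj_apply, smul_eq_mul]


lemma gaussianPdf_eq (μ : EuclideanSpace ℝ (Fin d)) (S : Matrix (Fin d) (Fin d) ℝ)
    (x : EuclideanSpace ℝ (Fin d)) :
    gaussianPdf μ S x = ((2 * Real.pi) ^ (-(d : ℝ) / 2) * S.det ^ (-(1 : ℝ) / 2)) *
      Real.exp (-(1 / 2 : ℝ) * quadF S⁻¹ μ x) := by
  simp [gaussianPdf, quadF, dotProduct, Matrix.mulVec, Finset.mul_sum, mul_assoc]

lemma mixture_eq {k : ℕ} (α : Fin k → ℝ) (μ : Fin k → EuclideanSpace ℝ (Fin d))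
    (S : Fin k → Matrix (Fin d) (Fin d) ℝ) (x : EuclideanSpace ℝ (Fin d)) :
    mixturePdf α μ S x = ∑ i, (α i * ((2 * Real.pi) ^ (-(d : ℝ) / 2) * (S i).det ^ (-(1 : ℝ) / 2)))
      * Real.exp (-(1 / 2 : ℝ) * quadF (S i)⁻¹ (μ i) x) := by
  simp [mixturePdf, gaussianPdf_eq, mul_assoc]

lemma hasFDerivAt_mixture {k : ℕ} (α : Fin k → ℝ) (μ : Fin k → EuclideanSpace ℝ (Fin d))
    (S : Fin k → Matrix (Fin d) (Fin d) ℝ) (x : EuclideanSpace ℝ (Fin d)) :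
    HasFDerivAt (mixturePdf α μ S)
      (∑ i, ((α i * ((2 * Real.pi) ^ (-(d : ℝ) / 2) * (S i).det ^ (-(1 : ℝ) / 2)))
          * Real.exp (-(1 / 2 : ℝ) * quadF (S i)⁻¹ (μ i) x) * (-(1 / 2 : ℝ)))
        • quadD (S i)⁻¹ (μ i) x) x := by
  have : mixturePdf α μ S = fun x => ∑ i,
      (α i * ((2 * Real.pi) ^ (-(d : ℝ) / 2) * (S i).det ^ (-(1 : ℝ) / 2)))
      * Real.exp (-(1 / 2 : ℝ) * quadF (S i)⁻¹ (μ i) x) := funext fun x => mixture_eq α μ S x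
  rw [this]
  apply HasFDerivAt.fun_sum
  intro i _
  have hq := (hasFDerivAt_quadF (S i)⁻¹ (μ i) x).const_mul (-(1 / 2 : ℝ))
  have he := hq.exp
  have := he.const_mul (α i * ((2 * Real.pi) ^ (-(d : ℝ) / 2) * (S i).det ^ (-(1 : ℝ) / 2)))
  refine this.congr_fderiv ?_
  simp only [smul_smul, mul_assoc]

lemma contDiff_mixture {k : ℕ} (α : Fin k → ℝ) (μ : Fin k → EuclideanSpace ℝ (Fin d))
    (S : Fin k → Matrix (Fin d) (Fin d) ℝ) :
    ContDiff ℝ ∞ (mixturePdf α μ S) := by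
  have : mixturePdf α μ S = fun x => ∑ i,
      (α i * ((2 * Real.pi) ^ (-(d : ℝ) / 2) * (S i).det ^ (-(1 : ℝ) / 2)))
      * Real.exp (-(1 / 2 : ℝ) * quadF (S i)⁻¹ (μ i) x) := funext fun x => mixture_eq α μ S x
  rw [this]
  apply ContDiff.sum
  intro i _
  exact contDiff_const.mul (Real.contDiff_exp.comp (contDiff_const.mul (contDiff_quadF _ _)))

lemma quadscale (M : Matrix (Fin d) (Fin d) ℝ) (s : ℝ) (v : EuclideanSpace ℝ (Fin d)) :
    (∑ a, ∑ b, (s • v) a * (M a b * (s • v) b)) = s ^ 2 * ∑ a, ∑ b, v a * (M a b * v b) := by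
  rw [Finset.mul_sum]
  refine Finset.sum_congr rfl fun a _ => ?_
  rw [Finset.mul_sum]
  refine Finset.sum_congr rfl fun b _ => ?_
  simp [PiLp.smul_apply, smul_eq_mul]
  ring

lemma posdef_coercive {M : Matrix (Fin d) (Fin d) ℝ} (hM : M.PosDef) :
    ∃ c > 0, ∀ v : EuclideanSpace ℝ (Fin d), c * ‖v‖ ^ 2 ≤ ∑ a, ∑ b, v a * (M a b * v b) := by
  have key : ∀ v : EuclideanSpace ℝ (Fin d), v ≠ 0 →
      0 < ∑ a, ∑ b, v a * (M a b * v b) := by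
    intro v hv
    have hv' : (v : Fin d → ℝ) ≠ 0 := by
      intro h; apply hv; ext a; exact congrFun h a
    have := hM.re_dotProduct_pos (x := v) hv'
    simpa [dotProduct, Matrix.mulVec, Finset.mul_sum] using this
  by_cases hd : ∀ v : EuclideanSpace ℝ (Fin d), v = 0
  · refine ⟨1, one_pos, fun v => ?_⟩
    rw [hd v]; simp
  · push_neg at hd
    obtain ⟨v₀, hv₀⟩ := hd
    have hconts : Continuous (fun v : EuclideanSpace ℝ (Fin d) => ∑ a, ∑ b, v a * (M a b * v b)) := by
      refine continuous_finset_sum _ fun a _ => continuous_finset_sum _ fun b _ => ?_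
      exact ((continuous_apply a).comp (PiLp.continuous_ofLp ..)).mul
        (continuous_const.mul ((continuous_apply b).comp (PiLp.continuous_ofLp ..)))
    have hne : (Metric.sphere (0 : EuclideanSpace ℝ (Fin d)) 1).Nonempty := by
      refine ⟨‖v₀‖⁻¹ • v₀, ?_⟩
      simp [norm_smul, abs_of_nonneg (inv_nonneg.2 (norm_nonneg v₀)),
        inv_mul_cancel₀ (norm_ne_zero_iff.2 hv₀)]
    obtain ⟨u, hu, hmin⟩ := (isCompact_sphere (0 : EuclideanSpace ℝ (Fin d)) 1).exists_isMinOn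
      hne hconts.continuousOn
    have hu1 : ‖u‖ = 1 := by simpa using hu
    have hune : u ≠ 0 := by intro h; rw [h] at hu1; simp at hu1
    refine ⟨_, key u hune, fun v => ?_⟩
    rcases eq_or_ne v 0 with rfl | hv
    · simp
    · have hnv : (0 : ℝ) < ‖v‖ := norm_pos_iff.2 hv
      set u' : EuclideanSpace ℝ (Fin d) := ‖v‖⁻¹ • v with hu'
      have hu's : u' ∈ Metric.sphere (0 : EuclideanSpace ℝ (Fin d)) 1 := by
        simp [hu', norm_smul, abs_of_nonneg (inv_nonneg.2 (norm_nonneg v)),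
          inv_mul_cancel₀ hnv.ne']
      have hvrep : v = ‖v‖ • u' := by rw [hu', smul_inv_smul₀ hnv.ne']
      have hsc : (∑ a, ∑ b, v a * (M a b * v b))
          = ‖v‖ ^ 2 * ∑ a, ∑ b, u' a * (M a b * u' b) := by
        conv_lhs => rw [hvrep]
        rw [quadscale]
      rw [hsc]
      have := hmin hu's
      have h2 : (0:ℝ) ≤ ‖v‖ ^ 2 := by positivity
      calc (∑ a, ∑ b, u a * (M a b * u b)) * ‖v‖ ^ 2
          ≤ (∑ a, ∑ b, u' a * (M a b * u' b)) * ‖v‖ ^ 2 :=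
            mul_le_mul_of_nonneg_right this h2
        _ = ‖v‖ ^ 2 * ∑ a, ∑ b, u' a * (M a b * u' b) := by ring

lemma inner_eq_sum (w v : EuclideanSpace ℝ (Fin d)) : ⟪w, v⟫ = ∑ a, w a * v a := by
  simp [PiLp.inner_apply, RCLike.inner_apply, conj_trivial]
  exact Finset.sum_congr rfl fun _ _ => mul_comm _ _

lemma quadD_self {M : Matrix (Fin d) (Fin d) ℝ} (hsym : ∀ a b, M b a = M a b)
    (m x : EuclideanSpace ℝ (Fin d)) :
    quadD M m x x = 2 * ∑ a, ∑ b, x a * (M a b * (x b - m b)) := by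
  rw [quadD_apply]
  have hsplit : (∑ a, ∑ b, ((x a - m a) * (M a b * x b) + M a b * (x b - m b) * x a))
      = (∑ a, ∑ b, (x a - m a) * (M a b * x b))
        + ∑ a, ∑ b, M a b * (x b - m b) * x a := by
    rw [← Finset.sum_add_distrib]
    exact Finset.sum_congr rfl fun a _ => by rw [← Finset.sum_add_distrib]
  rw [hsplit]
  have h1 : (∑ a, ∑ b, (x a - m a) * (M a b * x b))
      = ∑ a, ∑ b, x a * (M a b * (x b - m b)) := by
    rw [Finset.sum_comm]
    refine Finset.sum_congr rfl fun a _ => Finset.sum_congr rfl fun b _ => ?_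
    rw [← hsym a b]; ring
  have h2 : (∑ a, ∑ b, M a b * (x b - m b) * x a)
      = ∑ a, ∑ b, x a * (M a b * (x b - m b)) :=
    Finset.sum_congr rfl fun a _ => Finset.sum_congr rfl fun b _ => by ring
  rw [h1, h2]; ring

set_option maxHeartbeats 1000000 in
lemma crit_bounded {k : ℕ} (α : Fin k → ℝ) (μ : Fin k → EuclideanSpace ℝ (Fin d))
    (S : Fin k → Matrix (Fin d) (Fin d) ℝ)
    (hα : ∀ i, 0 < α i) (hsum : (∑ i, α i) = 1) (hS : ∀ i, (S i).PosDef) :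
    ∃ R : ℝ, ∀ x : EuclideanSpace ℝ (Fin d),
      fderiv ℝ (mixturePdf α μ S) x = 0 → ‖x‖ ≤ R := by
  have hk : Nonempty (Fin k) := by
    rcases Nat.eq_zero_or_pos k with rfl | hk
    · simp at hsum
    · exact ⟨⟨0, hk⟩⟩
  set M : Fin k → Matrix (Fin d) (Fin d) ℝ := fun i => (S i)⁻¹ with hM
  have hMpd : ∀ i, (M i).PosDef := fun i => (hS i).inv
  have hMsym : ∀ i a b, M i b a = M i a b := by
    intro i a b
    have := (hMpd i).1
    calc M i b a = star (M i b a) := (star_trivial _).symm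
      _ = (M i)ᴴ a b := rfl
      _ = M i a b := by rw [this]
  choose c hc hcle using fun i => posdef_coercive (hMpd i)
  set w : Fin k → EuclideanSpace ℝ (Fin d) :=
    fun i => (WithLp.toLp 2 (fun b => ∑ a, M i a b * μ i a) : EuclideanSpace ℝ (Fin d)) with hw
  refine ⟨(∑ i, (‖μ i‖ + ‖w i‖ / c i)) + 1, fun x hx => ?_⟩
  by_contra hRlt
  rw [not_le] at hRlt
  set R : ℝ := (∑ i, (‖μ i‖ + ‖w i‖ / c i)) + 1 with hR
  -- the derivative applied to x vanishes
  have hL := (hasFDerivAt_mixture α μ S x).fderiv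
  have h0 : (∑ i, ((α i * ((2 * Real.pi) ^ (-(d : ℝ) / 2) * (S i).det ^ (-(1 : ℝ) / 2)))
          * Real.exp (-(1 / 2 : ℝ) * quadF (S i)⁻¹ (μ i) x) * (-(1 / 2 : ℝ)))
        • quadD (S i)⁻¹ (μ i) x) x = 0 := by
    rw [← hL, hx]; rfl
  rw [ContinuousLinearMap.sum_apply] at h0
  simp only [ContinuousLinearMap.smul_apply, smul_eq_mul] at h0
  -- each term is negative
  have hterm : ∀ i : Fin k,
      ((α i * ((2 * Real.pi) ^ (-(d : ℝ) / 2) * (S i).det ^ (-(1 : ℝ) / 2)))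
          * Real.exp (-(1 / 2 : ℝ) * quadF (S i)⁻¹ (μ i) x) * (-(1 / 2 : ℝ)))
        * quadD (S i)⁻¹ (μ i) x x < 0 := by
    intro i
    have hcst : 0 < α i * ((2 * Real.pi) ^ (-(d : ℝ) / 2) * (S i).det ^ (-(1 : ℝ) / 2)) := by
      have h2pi : (0:ℝ) < 2 * Real.pi := by positivity
      have hdet : (0:ℝ) < (S i).det := (hS i).det_pos
      exact mul_pos (hα i) (mul_pos (Real.rpow_pos_of_pos h2pi _) (Real.rpow_pos_of_pos hdet _))
    have hexp : 0 < Real.exp (-(1 / 2 : ℝ) * quadF (S i)⁻¹ (μ i) x) := Real.exp_pos _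
    -- quadD applied to x is positive
    set v : EuclideanSpace ℝ (Fin d) := x - μ i with hv
    have hva : ∀ a, v a = x a - μ i a := fun a => rfl
    have hnv : ‖v‖ > 1 + ‖w i‖ / c i := by
      have h1 : ‖x‖ - ‖μ i‖ ≤ ‖v‖ := norm_sub_norm_le x (μ i)
      have h2 : ‖μ i‖ + ‖w i‖ / c i ≤ ∑ j, (‖μ j‖ + ‖w j‖ / c j) :=
        Finset.single_le_sum (f := fun j => ‖μ j‖ + ‖w j‖ / c j)
          (fun j _ => add_nonneg (norm_nonneg _) (div_nonneg (norm_nonneg _) (hc j).le))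
          (Finset.mem_univ i)
      have := hRlt
      rw [hR] at this
      linarith
    have hquadpos : 0 < quadD (S i)⁻¹ (μ i) x x := by
      have hself := quadD_self (hMsym i) (μ i) x
      have hdec : (∑ a, ∑ b, x a * (M i a b * (x b - μ i b)))
          = (∑ a, ∑ b, v a * (M i a b * v b)) + ⟪w i, v⟫ := by
        rw [inner_eq_sum]
        have hwsum : (∑ b, w i b * v b) = ∑ a, ∑ b, μ i a * (M i a b * v b) := by
          rw [Finset.sum_comm]
          refine Finset.sum_congr rfl fun b _ => ?_
          rw [hw]
          show (∑ a, M i a b * μ i a) * v b = _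
          rw [Finset.sum_mul]
          exact Finset.sum_congr rfl fun a _ => by ring
        rw [hwsum, ← Finset.sum_add_distrib]
        refine Finset.sum_congr rfl fun a _ => ?_
        rw [← Finset.sum_add_distrib]
        refine Finset.sum_congr rfl fun b _ => ?_
        rw [hva a, hva b]; ring
      have hA : c i * ‖v‖ ^ 2 ≤ ∑ a, ∑ b, v a * (M i a b * v b) := hcle i v
      have hB : -(‖w i‖ * ‖v‖) ≤ ⟪w i, v⟫ := by
        have := abs_real_inner_le_norm (w i) v
        have h' := neg_abs_le (⟪w i, v⟫)
        linarith [abs_le.1 this]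
      have hwnn : (0:ℝ) ≤ ‖w i‖ := norm_nonneg _
      have hci := hc i
      rw [hself]
      show (0:ℝ) < 2 * ∑ a, ∑ b, x a * (M i a b * (x b - μ i b))
      rw [hdec]
      have hv1 : 1 ≤ ‖v‖ := by
        have : 0 ≤ ‖w i‖ / c i := div_nonneg hwnn hci.le
        linarith
      have hv0 : (0:ℝ) < ‖v‖ := lt_of_lt_of_le one_pos hv1
      have hcw : c i + ‖w i‖ < c i * ‖v‖ := by
        have h1 := mul_lt_mul_of_pos_left hnv hci
        rw [mul_add, mul_one, mul_div_cancel₀ _ hci.ne'] at h1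
        linarith
      have hP := mul_lt_mul_of_pos_right hcw hv0
      nlinarith [hP, hA, hB, hci, hv1]
    have hpos := mul_pos (mul_pos hcst hexp) hquadpos
    linarith [hpos]
  have hneg : (∑ i, ((α i * ((2 * Real.pi) ^ (-(d : ℝ) / 2) * (S i).det ^ (-(1 : ℝ) / 2)))
          * Real.exp (-(1 / 2 : ℝ) * quadF (S i)⁻¹ (μ i) x) * (-(1 / 2 : ℝ)))
        * quadD (S i)⁻¹ (μ i) x x) < 0 :=
    Finset.sum_neg (fun i _ => hterm i) Finset.univ_nonempty
  rw [h0] at hneg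
  exact lt_irrefl 0 hneg

section Main
variable {d : ℕ}

def dualToVec : (EuclideanSpace ℝ (Fin d) →L[ℝ] ℝ) →ₗ[ℝ] EuclideanSpace ℝ (Fin d) where
  toFun ℓ := (InnerProductSpace.toDual ℝ (EuclideanSpace ℝ (Fin d))).symm ℓ
  map_add' f g := map_add _ f g
  map_smul' c f := by
    simp [LinearIsometryEquiv.map_smulₛₗ, starRingEnd_apply]

def dualToVecL : (EuclideanSpace ℝ (Fin d) →L[ℝ] ℝ) →L[ℝ] EuclideanSpace ℝ (Fin d) :=
  LinearMap.toContinuousLinearMap dualToVec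

lemma dualToVecL_apply (ℓ : EuclideanSpace ℝ (Fin d) →L[ℝ] ℝ) :
    dualToVecL ℓ = (InnerProductSpace.toDual ℝ (EuclideanSpace ℝ (Fin d))).symm ℓ := rfl

lemma gradient_eq' (f : EuclideanSpace ℝ (Fin d) → ℝ) :
    gradient f = fun y => dualToVecL (fderiv ℝ f y) := rfl

end Main

end

set_option maxHeartbeats 1000000

/-- Proposition: infinitely many modes force a degenerate critical point.
If the modal set of a Gaussian mixture density $Φ$ is infinite, then $Φ$ has a degenerate
critical point. -/
theorem infinite_modes_degenerate_critical_point
    {d k : ℕ} (α : Fin k → ℝ) (μ : Fin k → EuclideanSpace ℝ (Fin d))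
    (S : Fin k → Matrix (Fin d) (Fin d) ℝ)
    (Φ : EuclideanSpace ℝ (Fin d) → ℝ)
    (hΦ : IsGaussianMixture Φ α μ S)
    (hmode : {x : EuclideanSpace ℝ (Fin d) | IsLocalMax Φ x}.Infinite) :
    ∃ x : EuclideanSpace ℝ (Fin d), gradient Φ x = 0 ∧ (hessianMatrix Φ x).det = 0 := by
  obtain ⟨hα, hsum, hS, hfx⟩ := hΦ
  obtain rfl : Φ = mixturePdf α μ S := funext hfx
  set Φ := mixturePdf α μ S with hΦdef
  have hsm : ContDiff ℝ ∞ Φ := contDiff_mixture α μ S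
  have hone : (1 : WithTop ℕ∞) ≤ ∞ := by
    exact_mod_cast (le_top : (1:ℕ∞) ≤ ⊤)
  have hsucc : (∞ + 1 : WithTop ℕ∞) ≤ ∞ := by
    exact_mod_cast (le_top : ((⊤:ℕ∞) + 1 : ℕ∞) ≤ ⊤)
  have hfd_smooth : ContDiff ℝ ∞ (fderiv ℝ Φ) := hsm.fderiv_right hsucc
  -- critical points are bounded
  obtain ⟨R, hR⟩ := crit_bounded α μ S hα hsum hS
  -- an accumulating sequence of distinct modes
  set emb := hmode.natEmbedding with hemb
  set u : ℕ → EuclideanSpace ℝ (Fin d) := fun n => (emb n : EuclideanSpace ℝ (Fin d)) with hu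
  have huinj : Function.Injective u := fun n m h => emb.injective (Subtype.ext h)
  have hucrit : ∀ n, fderiv ℝ Φ (u n) = 0 := fun n => (emb n).2.fderiv_eq_zero
  have hub : ∀ n, u n ∈ Metric.closedBall (0 : EuclideanSpace ℝ (Fin d)) R := by
    intro n
    rw [Metric.mem_closedBall, dist_zero_right]
    exact hR _ (hucrit n)
  obtain ⟨x₀, -, φ, hφmono, hconv⟩ :=
    (isCompact_closedBall (0 : EuclideanSpace ℝ (Fin d)) R).tendsto_subseq hub
  -- the limit is a critical point
  have hfd_cont : Continuous (fderiv ℝ Φ) := hfd_smooth.continuous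
  have hx₀crit : fderiv ℝ Φ x₀ = 0 := by
    have h1 : Filter.Tendsto (fun n => fderiv ℝ Φ (u (φ n))) Filter.atTop
        (nhds (fderiv ℝ Φ x₀)) := (hfd_cont.tendsto x₀).comp hconv
    have h2 : (fun n => fderiv ℝ Φ (u (φ n))) = fun _ => (0 : _) :=
      funext fun n => hucrit _
    rw [h2] at h1
    exact tendsto_nhds_unique h1 tendsto_const_nhds
  have hgradx₀ : gradient Φ x₀ = 0 := by
    rw [show gradient Φ x₀ = dualToVecL (fderiv ℝ Φ x₀) from rfl, hx₀crit, map_zero]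
  refine ⟨x₀, hgradx₀, ?_⟩
  by_contra hdet
  -- gradient is smooth
  have hGeq : gradient Φ = fun y => dualToVecL (fderiv ℝ Φ y) := gradient_eq' Φ
  have hGsm : ContDiff ℝ ∞ (gradient Φ) := by
    rw [hGeq]; exact dualToVecL.contDiff.comp hfd_smooth
  set T : EuclideanSpace ℝ (Fin d) →L[ℝ] EuclideanSpace ℝ (Fin d) :=
    fderiv ℝ (gradient Φ) x₀ with hT
  -- T in coordinates is the transpose of the Hessian
  have hΨdiff : DifferentiableAt ℝ (fderiv ℝ Φ) x₀ :=
    (hfd_smooth.differentiable (by simp)).differentiableAt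
  have hTcomp : T = dualToVecL.comp (fderiv ℝ (fderiv ℝ Φ) x₀) := by
    rw [hT, hGeq]
    exact (dualToVecL.hasFDerivAt.comp x₀ hΨdiff.hasFDerivAt).fderiv
  have hTinner : ∀ uu vv : EuclideanSpace ℝ (Fin d),
      ⟪T uu, vv⟫ = fderiv ℝ (fderiv ℝ Φ) x₀ uu vv := by
    intro uu vv
    rw [hTcomp]
    simp only [ContinuousLinearMap.coe_comp', Function.comp_apply, dualToVecL_apply]
    exact InnerProductSpace.toDual_symm_apply
  have hTcoord : ∀ (uu : EuclideanSpace ℝ (Fin d)) (j : Fin d),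
      T uu j = fderiv ℝ (fderiv ℝ Φ) x₀ uu (EuclideanSpace.single j 1) := by
    intro uu j
    rw [← hTinner]
    rw [inner_eq_sum]
    simp [EuclideanSpace.single_apply]
  have hHess : ∀ i j, hessianMatrix Φ x₀ i j
      = fderiv ℝ (fderiv ℝ Φ) x₀ (EuclideanSpace.single i 1) (EuclideanSpace.single j 1) := by
    intro i j
    show iteratedFDeriv ℝ 2 Φ x₀ ![_, _] = _
    rw [iteratedFDeriv_two_apply]
    simp
  -- build the continuous linear equivalence
  set b := (EuclideanSpace.basisFun (Fin d) ℝ).toBasis with hb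
  have hbapp : ∀ i, b i = EuclideanSpace.single i 1 := by
    intro i
    rw [hb]
    rw [OrthonormalBasis.coe_toBasis]
    exact EuclideanSpace.basisFun_apply _ _ i
  have hbrepr : ∀ (y : EuclideanSpace ℝ (Fin d)) i, b.repr y i = y i := by
    intro y i
    rw [hb, OrthonormalBasis.coe_toBasis_repr_apply]
    rfl
  have hmat : LinearMap.toMatrix b b (T : _ →ₗ[ℝ] _) = (hessianMatrix Φ x₀)ᵀ := by
    ext i j
    rw [LinearMap.toMatrix_apply, hbrepr, hbapp, Matrix.transpose_apply, hHess j i]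
    exact hTcoord _ _
  have hunit : IsUnit (LinearMap.toMatrix b b
      ((T : _ →ₗ[ℝ] _))).det := by
    rw [hmat, Matrix.det_transpose]
    exact isUnit_iff_ne_zero.2 hdet
  set TL := (LinearEquiv.ofIsUnitDet hunit).toContinuousLinearEquiv with hTL
  have hTLcoe : (TL : EuclideanSpace ℝ (Fin d) →L[ℝ] EuclideanSpace ℝ (Fin d)) = T := by
    apply ContinuousLinearMap.ext
    intro y
    have h1 : (TL : EuclideanSpace ℝ (Fin d) → EuclideanSpace ℝ (Fin d)) y
        = (LinearEquiv.ofIsUnitDet hunit) y := by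
      rw [hTL]; rw [LinearEquiv.coe_toContinuousLinearEquiv']
    have h2 : (LinearEquiv.ofIsUnitDet hunit) y = T y := by
      have := LinearEquiv.coe_ofIsUnitDet hunit
      exact congrArg (fun f : _ →ₗ[ℝ] _ => f y) this
    exact h1.trans h2
  -- strict derivative and local injectivity
  have hstrict0 : HasStrictFDerivAt (gradient Φ) T x₀ :=
    (hGsm.contDiffAt).hasStrictFDerivAt (by simp)
  have hstrict : HasStrictFDerivAt (gradient Φ)
      (TL : EuclideanSpace ℝ (Fin d) →L[ℝ] EuclideanSpace ℝ (Fin d)) x₀ := by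
    rw [hTLcoe]; exact hstrict0
  set PH := hstrict.toOpenPartialHomeomorph (gradient Φ) with hPH
  have hx₀mem : x₀ ∈ PH.source := hstrict.mem_toOpenPartialHomeomorph_source
  have hinj : Set.InjOn (gradient Φ) PH.source := by
    have h := PH.injOn
    rwa [hstrict.toOpenPartialHomeomorph_coe] at h
  have hopen : IsOpen PH.source := PH.open_source
  -- get two distinct modes in the source
  have hev : ∀ᶠ n in Filter.atTop, u (φ n) ∈ PH.source :=
    hconv.eventually (hopen.eventually_mem hx₀mem)
  obtain ⟨N, hN⟩ := Filter.eventually_atTop.1 hev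
  have hg0 : ∀ n, gradient Φ (u n) = 0 := by
    intro n
    rw [show gradient Φ (u n) = dualToVecL (fderiv ℝ Φ (u n)) from rfl, hucrit n, map_zero]
  have hne : u (φ N) ≠ u (φ (N + 1)) :=
    fun h => by simpa using hφmono.injective (huinj h)
  have hcontra : ∀ n, N ≤ n → u (φ n) ≠ x₀ → False := by
    intro n hn hnex
    have h1 : gradient Φ (u (φ n)) = gradient Φ x₀ := by rw [hg0, hgradx₀]
    exact hnex (hinj (hN n hn) hx₀mem h1)
  rcases eq_or_ne (u (φ N)) x₀ with h | h
  · exact hcontra (N + 1) (Nat.le_succ N) (fun h2 => hne (h.trans h2.symm)) |>.elim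
  · exact (hcontra N le_rfl h).elim
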